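/- arXiv:2605.28274 — 2 statements merged into one kernel-verified Lean document; each statement's English description precedes it below -/
import Mathlib

section
/- Let A ∈ ℝ^{n×n}, B ∈ ℝ^{m×m}, C1 ∈ ℝ^{n×s}, C2 ∈ ℝ^{m×s}, F := I_m ⊗ A + Bᵀ ⊗ I_n, and c := vec(C1 C2ᵀ). Let V ∈ ℝ^{n×p} be a matrix with orthonormal columns whose range equals the block Krylov subspace K_k^□(A,C1) (the range of [C1, AC1, …, A^{k-1}C1]), and let W ∈ ℝ^{m×q} be a matrix with orthonormal columns whose range equals K_k^□(Bᵀ,C2) (the range of [C2, BᵀC2, …, (Bᵀ)^{k-1}C2]). Then for every Z ∈ ℝ^{n×m} with vec(Z) ∈ K_k(F,c) := span(c, Fc, …, F^{k-1}c), there exists a matrix Ẑ ∈ ℝ^{p×q} such that Z = V Ẑ Wᵀ. -/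
open Matrix Kronecker

noncomputable section

/-- `vec X` stacks the columns of `X` on top of each other; the entry of `vec X`
indexed by `(j, i)` (column `j`, row `i`) is `X i j`. -/
def vec {n m : ℕ} (X : Matrix (Fin n) (Fin m) ℝ) : Fin m × Fin n → ℝ :=
  fun p => X p.2 p.1

/-- The Krylov subspace `K_k(F, c) = span(c, Fc, …, F^{k-1}c)`. -/
def krylov {N : Type*} [Fintype N] [DecidableEq N] (F : Matrix N N ℝ) (c : N → ℝ) (k : ℕ) :
    Submodule ℝ (N → ℝ) :=
  Submodule.span ℝ (Set.range fun i : Fin k => (F ^ (i : ℕ)) *ᵥ c)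

/-- The block Krylov matrix `[C, AC, A²C, …, A^{k-1}C]`. -/
def krylovMat {n s : ℕ} (A : Matrix (Fin n) (Fin n) ℝ) (C : Matrix (Fin n) (Fin s) ℝ) (k : ℕ) :
    Matrix (Fin n) (Fin k × Fin s) ℝ :=
  Matrix.of fun i p => (A ^ (p.1 : ℕ) * C) i p.2

lemma Fvec {n m : ℕ} (A : Matrix (Fin n) (Fin n) ℝ) (B : Matrix (Fin m) (Fin m) ℝ)
    (X : Matrix (Fin n) (Fin m) ℝ) :
    ((1 : Matrix (Fin m) (Fin m) ℝ) ⊗ₖ A + Bᵀ ⊗ₖ (1 : Matrix (Fin n) (Fin n) ℝ)) *ᵥ _root_.vec X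
      = _root_.vec (A * X + X * B) := by
  funext ⟨j, i⟩
  simp only [_root_.vec, Matrix.mulVec, Matrix.add_apply, Matrix.mul_apply, dotProduct,
    Matrix.kroneckerMap_apply, Matrix.transpose_apply, Fintype.sum_prod_type,
    add_mul, Finset.sum_add_distrib, Matrix.one_apply]
  congr 1
  · simp [ite_mul]
  · simp [mul_ite, ite_mul, mul_comm]

def vecL (n m : ℕ) : Matrix (Fin n) (Fin m) ℝ →ₗ[ℝ] (Fin m × Fin n → ℝ) where
  toFun := _root_.vec
  map_add' := fun _ _ => rfl
  map_smul' := fun _ _ => rfl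

lemma vec_injective {n m : ℕ} : Function.Injective (vec (n := n) (m := m)) := by
  intro X Y h
  funext i j
  exact congrFun h (j, i)

/-- If each column of `M` is fixed after projection onto range of V. -/
lemma proj_fix_left {n p s : ℕ} (V : Matrix (Fin n) (Fin p) ℝ) (M : Matrix (Fin n) (Fin s) ℝ)
    (h : ∀ c : Fin s, (fun i => M i c) ∈ LinearMap.range V.mulVecLin)
    (hVorth : Vᵀ * V = 1) :
    V * Vᵀ * M = M := by
  ext i c
  obtain ⟨y, hy⟩ := h c
  have h2 : (V * Vᵀ) *ᵥ (fun i => M i c) = fun i => M i c := by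
    rw [← hy]
    simp only [Matrix.mulVecLin_apply, ← Matrix.mulVec_mulVec]
    rw [show Vᵀ *ᵥ (V *ᵥ y) = (Vᵀ * V) *ᵥ y from Matrix.mulVec_mulVec _ _ _]
    rw [hVorth, Matrix.one_mulVec]
  have := congrFun h2 i
  simpa [Matrix.mulVec, dotProduct, Matrix.mul_apply] using this

lemma col_mem_krylovMat {n s : ℕ} (A : Matrix (Fin n) (Fin n) ℝ) (C : Matrix (Fin n) (Fin s) ℝ)
    (k j : ℕ) (hj : j < k) (c : Fin s) :
    (fun i => (A ^ j * C) i c) ∈ LinearMap.range (krylovMat A C k).mulVecLin := by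
  refine ⟨Pi.single (⟨j, hj⟩, c) 1, ?_⟩
  funext i
  simp [Matrix.mulVecLin_apply, Matrix.mulVec_single, krylovMat]

theorem stmt7 (n m s p q : ℕ) (A : Matrix (Fin n) (Fin n) ℝ) (B : Matrix (Fin m) (Fin m) ℝ)
    (C1 : Matrix (Fin n) (Fin s) ℝ) (C2 : Matrix (Fin m) (Fin s) ℝ) (k : ℕ)
    (V : Matrix (Fin n) (Fin p) ℝ) (W : Matrix (Fin m) (Fin q) ℝ)
    (hVorth : Vᵀ * V = 1) (hWorth : Wᵀ * W = 1)
    (hVrange : LinearMap.range V.mulVecLin = LinearMap.range (krylovMat A C1 k).mulVecLin)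
    (hWrange : LinearMap.range W.mulVecLin = LinearMap.range (krylovMat Bᵀ C2 k).mulVecLin) :
    ∀ Z : Matrix (Fin n) (Fin m) ℝ,
      _root_.vec Z ∈ krylov
        ((1 : Matrix (Fin m) (Fin m) ℝ) ⊗ₖ A + Bᵀ ⊗ₖ (1 : Matrix (Fin n) (Fin n) ℝ))
        (_root_.vec (C1 * C2ᵀ)) k →
      ∃ Zh : Matrix (Fin p) (Fin q) ℝ, Z = V * Zh * Wᵀ := by
  classical
  intro Z hZ
  set F := (1 : Matrix (Fin m) (Fin m) ℝ) ⊗ₖ A + Bᵀ ⊗ₖ (1 : Matrix (Fin n) (Fin n) ℝ) with hFdef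
  -- graded submodules of matrices
  set T : ℕ → Submodule ℝ (Matrix (Fin n) (Fin m) ℝ) := fun i =>
    Submodule.span ℝ {M | ∃ jl : ℕ × ℕ, jl.1 ≤ i ∧ jl.2 ≤ i ∧
      M = A ^ jl.1 * C1 * C2ᵀ * B ^ jl.2} with hTdef
  set S : Submodule ℝ (Matrix (Fin n) (Fin m) ℝ) :=
    Submodule.span ℝ {M | ∃ jl : ℕ × ℕ, jl.1 < k ∧ jl.2 < k ∧
      M = A ^ jl.1 * C1 * C2ᵀ * B ^ jl.2} with hSdef
  -- the linear map X ↦ A X + X B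
  set L : Matrix (Fin n) (Fin m) ℝ →ₗ[ℝ] Matrix (Fin n) (Fin m) ℝ :=
    { toFun := fun X => A * X + X * B
      map_add' := fun X Y => by simp only [Matrix.mul_add, Matrix.add_mul]; abel
      map_smul' := fun r X => by
        simp [Matrix.mul_smul, Matrix.smul_mul, smul_add] } with hLdef
  have hLT : ∀ i : ℕ, ∀ M ∈ T i, L M ∈ T (i + 1) := by
    intro i M hM
    refine Submodule.span_induction ?_ ?_ ?_ ?_ hM
    · rintro X ⟨⟨j, l⟩, hj, hl, rfl⟩
      have h1 : A * (A ^ j * C1 * C2ᵀ * B ^ l) = A ^ (j+1) * C1 * C2ᵀ * B ^ l := by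
        rw [pow_succ']; simp only [Matrix.mul_assoc]
      have h2 : (A ^ j * C1 * C2ᵀ * B ^ l) * B = A ^ j * C1 * C2ᵀ * B ^ (l+1) := by
        rw [pow_succ]; simp only [Matrix.mul_assoc]
      show A * (A ^ j * C1 * C2ᵀ * B ^ l) + (A ^ j * C1 * C2ᵀ * B ^ l) * B ∈ T (i+1)
      rw [h1, h2]
      exact add_mem
        (Submodule.subset_span ⟨(j+1, l), Nat.succ_le_succ hj, hl.trans (Nat.le_succ i), rfl⟩)
        (Submodule.subset_span ⟨(j, l+1), hj.trans (Nat.le_succ i), Nat.succ_le_succ hl, rfl⟩)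
    · simpa using (Submodule.zero_mem (T (i+1)))
    · intro X Y _ _ hX hY
      simpa using add_mem hX hY
    · intro r X _ hX
      simpa using Submodule.smul_mem _ r hX
  have claim1 : ∀ i : ℕ, ∃ M ∈ T i, (F ^ i) *ᵥ _root_.vec (C1 * C2ᵀ) = _root_.vec M := by
    intro i
    induction i with
    | zero =>
      refine ⟨C1 * C2ᵀ, Submodule.subset_span ⟨(0, 0), le_refl 0, le_refl 0, by simp⟩, ?_⟩
      simp [Matrix.one_mulVec]
    | succ i ih =>
      obtain ⟨M, hM, hvec⟩ := ih
      refine ⟨L M, hLT i M hM, ?_⟩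
      rw [pow_succ', ← Matrix.mulVec_mulVec, hvec, hFdef, Fvec]
      rfl
  -- Z ∈ S
  have hTS : ∀ i : ℕ, i < k → T i ≤ S := by
    intro i hi
    rw [hTdef]
    refine Submodule.span_le.mpr ?_
    rintro X ⟨⟨j, l⟩, hj, hl, rfl⟩
    exact Submodule.subset_span ⟨(j, l), lt_of_le_of_lt hj hi, lt_of_le_of_lt hl hi, rfl⟩
  have hZS : Z ∈ S := by
    have hmap : krylov F (_root_.vec (C1 * C2ᵀ)) k ≤ Submodule.map (vecL n m) S := by
      rw [krylov]
      refine Submodule.span_le.mpr ?_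
      rintro x ⟨i, rfl⟩
      obtain ⟨M, hM, hvec⟩ := claim1 i
      exact ⟨M, hTS i i.isLt hM, hvec.symm⟩
    obtain ⟨M, hM, hMe⟩ := hmap hZ
    have : M = Z := vec_injective hMe
    rwa [← this]
  -- projection fixes S
  have hfix : V * Vᵀ * Z * (W * Wᵀ) = Z := by
    refine Submodule.span_induction ?_ ?_ ?_ ?_ hZS
    · rintro X ⟨⟨j, l⟩, hj, hl, rfl⟩
      have e1 : V * Vᵀ * (A ^ j * C1) = A ^ j * C1 :=
        proj_fix_left V _ (fun c => hVrange ▸ col_mem_krylovMat A C1 k j hj c) hVorth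
      have e2 : C2ᵀ * B ^ l * (W * Wᵀ) = C2ᵀ * B ^ l := by
        have e2' : W * Wᵀ * (Bᵀ ^ l * C2) = Bᵀ ^ l * C2 :=
          proj_fix_left W _ (fun c => hWrange ▸ col_mem_krylovMat Bᵀ C2 k l hl c) hWorth
        have := congrArg Matrix.transpose e2'
        simpa [Matrix.transpose_mul, Matrix.transpose_pow, Matrix.mul_assoc] using this
      calc V * Vᵀ * (A ^ j * C1 * C2ᵀ * B ^ l) * (W * Wᵀ)
          = (V * Vᵀ * (A ^ j * C1)) * (C2ᵀ * B ^ l * (W * Wᵀ)) := by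
            simp only [Matrix.mul_assoc]
        _ = (A ^ j * C1) * (C2ᵀ * B ^ l) := by rw [e1, e2]
        _ = A ^ j * C1 * C2ᵀ * B ^ l := by simp only [Matrix.mul_assoc]
    · simp
    · intro X Y _ _ hX hY
      simp only [Matrix.mul_add, Matrix.add_mul, hX, hY]
    · intro r X _ hX
      simp only [Matrix.mul_smul, Matrix.smul_mul, hX]
  refine ⟨Vᵀ * Z * W, ?_⟩
  conv_lhs => rw [← hfix]
  simp only [Matrix.mul_assoc]
end
end

section
/- Let A ∈ ℝ^{n×n}, B ∈ ℝ^{m×m}, C1 ∈ ℝ^{n×s}, C2 ∈ ℝ^{m×s}, F := I_m ⊗ A + Bᵀ ⊗ I_n, and c := vec(C1 C2ᵀ). Then for every natural number i, F^i c = Σ_{l=0}^{i} binom(i,l) · [ ((Bᵀ)^{i-l} C2) ⊗ (A^l C1) ] · vec(I_s). -/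
open Matrix Kronecker

noncomputable section

lemma kron_mulVec {a b c d : ℕ} (M : Matrix (Fin a) (Fin b) ℝ)
    (N : Matrix (Fin c) (Fin d) ℝ) (X : Matrix (Fin d) (Fin b) ℝ) :
    (M ⊗ₖ N) *ᵥ _root_.vec X = _root_.vec (N * X * Mᵀ) := by
  funext p
  obtain ⟨j, i⟩ := p
  simp only [_root_.vec, mulVec, dotProduct, Matrix.mul_apply, kroneckerMap_apply,
    Fintype.sum_prod_type, transpose_apply, Finset.sum_mul, Finset.mul_sum]
  apply Finset.sum_congr rfl; intro x _
  apply Finset.sum_congr rfl; intro y _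
  ring

lemma one_kron_pow {a b : ℕ} (A : Matrix (Fin b) (Fin b) ℝ) (l : ℕ) :
    ((1 : Matrix (Fin a) (Fin a) ℝ) ⊗ₖ A) ^ l = 1 ⊗ₖ (A ^ l) := by
  induction l with
  | zero => simp [Matrix.one_kronecker_one]
  | succ k ih => rw [pow_succ, ih, ← Matrix.mul_kronecker_mul, mul_one, ← pow_succ]

lemma pow_kron_one {a b : ℕ} (B : Matrix (Fin a) (Fin a) ℝ) (l : ℕ) :
    (B ⊗ₖ (1 : Matrix (Fin b) (Fin b) ℝ)) ^ l = (B ^ l) ⊗ₖ 1 := by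
  induction l with
  | zero => simp [Matrix.one_kronecker_one]
  | succ k ih => rw [pow_succ, ih, ← Matrix.mul_kronecker_mul, mul_one, ← pow_succ]

lemma sum_mulVec' {a b : Type*} [Fintype b] [DecidableEq b] (s : Finset ℕ)
    (M : ℕ → Matrix a b ℝ)
    (v : b → ℝ) : (∑ l ∈ s, M l) *ᵥ v = ∑ l ∈ s, M l *ᵥ v := by
  classical
  induction s using Finset.induction with
  | empty => simp
  | insert a t h ih => simp [Finset.sum_insert h, Matrix.add_mulVec, ih]

theorem stmt17 (n m s : ℕ) (A : Matrix (Fin n) (Fin n) ℝ) (B : Matrix (Fin m) (Fin m) ℝ)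
    (C1 : Matrix (Fin n) (Fin s) ℝ) (C2 : Matrix (Fin m) (Fin s) ℝ) (i : ℕ) :
    (((1 : Matrix (Fin m) (Fin m) ℝ) ⊗ₖ A + Bᵀ ⊗ₖ (1 : Matrix (Fin n) (Fin n) ℝ)) ^ i) *ᵥ
        _root_.vec (C1 * C2ᵀ) =
      ∑ l ∈ Finset.range (i + 1),
        (i.choose l : ℝ) • (((Bᵀ ^ (i - l) * C2) ⊗ₖ (A ^ l * C1)) *ᵥ
          _root_.vec (1 : Matrix (Fin s) (Fin s) ℝ)) := by
  have hc : Commute ((1 : Matrix (Fin m) (Fin m) ℝ) ⊗ₖ A)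
      (Bᵀ ⊗ₖ (1 : Matrix (Fin n) (Fin n) ℝ)) := by
    show _ = _
    rw [← Matrix.mul_kronecker_mul, ← Matrix.mul_kronecker_mul, one_mul, mul_one,
      one_mul, mul_one]
  rw [hc.add_pow, sum_mulVec']
  apply Finset.sum_congr rfl
  intro l _
  rw [one_kron_pow, pow_kron_one, ← Matrix.mul_kronecker_mul, one_mul, mul_one,
    ← (Nat.cast_commute (i.choose l) ((Bᵀ ^ (i - l)) ⊗ₖ (A ^ l))).eq,
    ← nsmul_eq_mul, ← Nat.cast_smul_eq_nsmul ℝ, smul_mulVec,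
    kron_mulVec, kron_mulVec]
  simp [Matrix.mul_assoc, Matrix.transpose_mul]
end
end
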